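/- Let N ≥ 1 be a fixed integer, let m_1, …, m_N be fixed non-negative integers with σ := ∑_{j=1}^{N} m_j ≥ 1. Then there exists a constant C > 0 (depending only on N and m_1, …, m_N) such that for every positive integer n, the maximum of ∏_{j=1}^{N} ( ∑_{t=0}^{m_j} binom(n_j, t) ) over all N-tuples (n_1, …, n_N) of non-negative integers with ∑_{j=1}^{N} n_j = n satisfies (1 − C/n) · ∏_{j=1}^{N} (1/m_j!) · (m_j · n / σ)^{m_j} ≤ max ≤ (1 + C/n) · ∏_{j=1}^{N} (1/m_j!) · (m_j · n / σ)^{m_j}, with the convention 0^0 = 1. -/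

import Mathlib

open Finset

lemma aux_sum_choose_le (k M : ℕ) :
    ∑ t ∈ Finset.range (M+1), k.choose t ≤ (k+M).choose M := by
  rw [Nat.add_choose_eq, Finset.Nat.sum_antidiagonal_eq_sum_range_succ_mk]
  refine Finset.sum_le_sum fun t ht => ?_
  have h1 : 1 ≤ M.choose (M - t) := Nat.choose_pos (Nat.sub_le _ _)
  calc k.choose t = k.choose t * 1 := (mul_one _).symm
    _ ≤ k.choose t * M.choose (M - t) := Nat.mul_le_mul_left _ h1

lemma aux_bern (a : ℝ) (ha : 0 < a) : ∀ (k : ℕ) (x : ℝ), 0 ≤ x → x ≤ a →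
    (1+x)^k ≤ 1 + (x/a) * ((1+a)^k - 1)
  | 0, x, _, _ => by simp
  | (k+1), x, hx0, hxa => by
    have ih := aux_bern a ha k x hx0 hxa
    have h1x : (0:ℝ) ≤ 1 + x := by linarith
    have hak : (1:ℝ) ≤ (1+a)^k := one_le_pow₀ (by linarith)
    have ht0 : 0 ≤ x/a := div_nonneg hx0 ha.le
    have hxa' : x = (x/a) * a := by field_simp
    have key : 0 ≤ (x/a) * ((1+a)^k - 1) * (a - x) :=
      mul_nonneg (mul_nonneg ht0 (by linarith)) (by linarith)
    calc (1+x)^(k+1) = (1+x)^k * (1+x) := pow_succ _ _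
      _ ≤ (1 + (x/a) * ((1+a)^k - 1)) * (1+x) :=
          mul_le_mul_of_nonneg_right ih h1x
      _ ≤ 1 + (x/a) * ((1+a)^(k+1) - 1) := by rw [pow_succ]; nlinarith [key]

lemma aux_amgm (N : ℕ) (m : Fin N → ℕ) (hσ : 1 ≤ ∑ j, m j) (x : Fin N → ℝ)
    (hx : ∀ j, 0 ≤ x j) :
    ∏ j, x j ^ m j ≤ ∏ j, ((m j : ℝ) * (∑ i, x i) / ((∑ i, m i : ℕ) : ℝ)) ^ m j := by
  set σn : ℕ := ∑ i, m i with hσn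
  have hσ0 : (0:ℝ) < (σn : ℝ) := by exact_mod_cast hσ
  set S : ℝ := ∑ i, x i with hS
  have hS0 : 0 ≤ S := Finset.sum_nonneg fun i _ => hx i
  by_cases hSz : S = 0
  · -- all x j = 0; some m j ≠ 0
    have hx0 : ∀ j ∈ Finset.univ, x j = 0 :=
      (Finset.sum_eq_zero_iff_of_nonneg (fun i _ => hx i)).1 hSz
    obtain ⟨j0, -, hj0⟩ : ∃ j ∈ Finset.univ, m j ≠ 0 := by
      by_contra h
      push_neg at h
      have : σn = 0 := Finset.sum_eq_zero fun j hj => h j hj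
      omega
    have hL : ∏ j, x j ^ m j = 0 := by
      apply Finset.prod_eq_zero (Finset.mem_univ j0)
      rw [hx0 j0 (Finset.mem_univ j0)]
      exact zero_pow hj0
    rw [hL]
    exact Finset.prod_nonneg fun j _ => pow_nonneg (by positivity) _
  · have hSpos : 0 < S := lt_of_le_of_ne hS0 (Ne.symm hSz)
    set s : Finset (Fin N) := Finset.univ.filter (fun j => m j ≠ 0) with hs
    have hmem : ∀ j ∈ s, m j ≠ 0 := fun j hj => (Finset.mem_filter.1 hj).2
    set w : Fin N → ℝ := fun j => (m j : ℝ) / σn with hw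
    set z : Fin N → ℝ := fun j => x j * σn / ((m j : ℝ) * S) with hz
    have hsumw : ∑ j ∈ s, w j = 1 := by
      have h1 : ∑ j ∈ s, (m j : ℝ) = (σn : ℝ) := by
        rw [hs, Finset.sum_filter]
        rw [show ((σn : ℕ) : ℝ) = ∑ j, (m j : ℝ) by push_cast [hσn]; ring]
        refine Finset.sum_congr rfl fun j _ => ?_
        by_cases h : m j = 0 <;> simp [h]
      rw [hw, ← Finset.sum_div, h1, div_self hσ0.ne']
    have hzn : ∀ j ∈ s, 0 ≤ z j := fun j hj =>
      div_nonneg (mul_nonneg (hx j) hσ0.le) (mul_nonneg (Nat.cast_nonneg _) hSpos.le)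
    have hgm := Real.geom_mean_le_arith_mean_weighted s w z
      (fun j _ => div_nonneg (Nat.cast_nonneg _) hσ0.le) hsumw hzn
    have hrhs : ∑ j ∈ s, w j * z j ≤ 1 := by
      have heq : ∀ j ∈ s, w j * z j = x j / S := by
        intro j hj
        have hmj : ((m j : ℝ)) ≠ 0 := Nat.cast_ne_zero.2 (hmem j hj)
        simp only [hw, hz]
        field_simp
      rw [Finset.sum_congr rfl heq]
      have : ∑ j ∈ s, x j / S ≤ ∑ j ∈ Finset.univ, x j / S :=
        Finset.sum_le_sum_of_subset_of_nonneg (Finset.filter_subset _ _)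
          (fun j _ _ => div_nonneg (hx j) hS0)
      calc ∑ j ∈ s, x j / S ≤ ∑ j, x j / S := this
        _ = 1 := by rw [← Finset.sum_div, ← hS, div_self hSz]
    have hA1 : ∏ j ∈ s, z j ^ (w j) ≤ 1 := le_trans hgm hrhs
    have hA0 : 0 ≤ ∏ j ∈ s, z j ^ (w j) :=
      Finset.prod_nonneg fun j hj => Real.rpow_nonneg (hzn j hj) _
    have hpow : (∏ j ∈ s, z j ^ (w j)) ^ σn ≤ 1 := pow_le_one₀ hA0 hA1
    have hkey : ∏ j ∈ s, z j ^ (m j) ≤ 1 := by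
      have heq : ∏ j ∈ s, z j ^ (m j) = (∏ j ∈ s, z j ^ (w j)) ^ σn := by
        rw [← Finset.prod_pow]
        refine Finset.prod_congr rfl fun j hj => ?_
        rw [← Real.rpow_natCast (z j ^ (w j)) σn, ← Real.rpow_mul (hzn j hj)]
        rw [show w j * (σn : ℝ) = (m j : ℝ) by rw [hw]; exact div_mul_cancel₀ _ hσ0.ne']
        exact (Real.rpow_natCast _ _).symm
      rw [heq]
      exact hpow
    -- now convert
    have hfac : ∀ j ∈ s, x j ^ m j = z j ^ m j * ((m j : ℝ) * S / σn) ^ m j := by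
      intro j hj
      rw [← mul_pow]
      congr 1
      have hmj : ((m j : ℝ)) ≠ 0 := Nat.cast_ne_zero.2 (hmem j hj)
      simp only [hz]
      field_simp
    have hprod_s : ∏ j ∈ s, x j ^ m j ≤ ∏ j ∈ s, ((m j : ℝ) * S / σn) ^ m j := by
      rw [Finset.prod_congr rfl hfac, Finset.prod_mul_distrib]
      have h2 : 0 ≤ ∏ j ∈ s, ((m j : ℝ) * S / σn) ^ m j :=
        Finset.prod_nonneg fun j _ => pow_nonneg (by positivity) _
      calc (∏ j ∈ s, z j ^ m j) * ∏ j ∈ s, ((m j : ℝ) * S / σn) ^ m j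
          ≤ 1 * ∏ j ∈ s, ((m j : ℝ) * S / σn) ^ m j :=
            mul_le_mul_of_nonneg_right hkey h2
        _ = _ := one_mul _
    have hextL : ∏ j, x j ^ m j = ∏ j ∈ s, x j ^ m j := by
      refine (Finset.prod_subset (Finset.filter_subset _ _) fun j _ hj => ?_).symm
      simp only [hs, Finset.mem_filter, Finset.mem_univ, true_and, not_not] at hj
      simp [hj]
    have hextR : ∏ j, ((m j : ℝ) * S / σn) ^ m j = ∏ j ∈ s, ((m j : ℝ) * S / σn) ^ m j := by
      refine (Finset.prod_subset (Finset.filter_subset _ _) fun j _ hj => ?_).symm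
      simp only [hs, Finset.mem_filter, Finset.mem_univ, true_and, not_not] at hj
      simp [hj]
    rw [hextL, hextR]
    exact hprod_s

set_option maxHeartbeats 1000000 in
/-- Asymptotics of the optimization problem: for fixed `N ≥ 1` and fixed non-negative
integers `m_1, …, m_N` with `σ = ∑ m_j ≥ 1`, there is a constant `C > 0` such that for every
`n ≥ 1`, the maximum of `∏_j ∑_{t=0}^{m_j} C(n_j, t)` over tuples of non-negative integers
`(n_1, …, n_N)` with `∑ n_j = n` lies between `(1 − C/n) · ∏_j (1/m_j!)(m_j·n/σ)^{m_j}` and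
`(1 + C/n) · ∏_j (1/m_j!)(m_j·n/σ)^{m_j}`; i.e. every tuple's value is at most the upper
bound and some tuple attains at least the lower bound. -/
theorem statement10 (N : ℕ) (hN : 1 ≤ N) (m : Fin N → ℕ) (hσ : 1 ≤ ∑ j, m j) :
    ∃ C : ℝ, 0 < C ∧ ∀ n : ℕ, 1 ≤ n →
      (∀ v : Fin N → ℕ, ∑ j, v j = n →
        ((∏ j, ∑ t ∈ Finset.range (m j + 1), Nat.choose (v j) t : ℕ) : ℝ) ≤
          (1 + C / n) *
            ∏ j, ((1 : ℝ) / (Nat.factorial (m j)) *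
              ((m j : ℝ) * n / (∑ i, m i : ℕ)) ^ (m j))) ∧
      (∃ v : Fin N → ℕ, ∑ j, v j = n ∧
        (1 - C / n) *
            ∏ j, ((1 : ℝ) / (Nat.factorial (m j)) *
              ((m j : ℝ) * n / (∑ i, m i : ℕ)) ^ (m j)) ≤
          ((∏ j, ∑ t ∈ Finset.range (m j + 1), Nat.choose (v j) t : ℕ) : ℝ)) := by
  classical
  set σn : ℕ := ∑ j, m j with hσn
  have hσ0 : (0:ℝ) < (σn:ℝ) := by exact_mod_cast hσ
  refine ⟨((1:ℝ)+σn)^σn + (σn:ℝ)^2 + σn, by positivity, fun n hn => ?_⟩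
  set C : ℝ := ((1:ℝ)+σn)^σn + (σn:ℝ)^2 + σn with hC
  have hn0 : (0:ℝ) < n := by exact_mod_cast hn
  set F : ℝ := ∏ j, (1 / ((m j).factorial : ℝ)) with hF
  set Q : ℝ := ∏ j, ((m j : ℝ) * n / (σn:ℝ)) ^ m j with hQ
  have hF0 : 0 ≤ F := Finset.prod_nonneg fun j _ => by positivity
  have hQ0 : 0 ≤ Q := Finset.prod_nonneg fun j _ => pow_nonneg (by positivity) _
  have hPF : ∏ j, ((1:ℝ)/(Nat.factorial (m j)) * ((m j : ℝ) * n / ((σn:ℕ):ℝ)) ^ (m j))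
      = F * Q := by
    rw [hF, hQ, ← Finset.prod_mul_distrib]
  have factor_eq : ∀ r : ℝ, ∏ j, ((m j:ℝ) * r / (σn:ℝ))^(m j)
      = (r/(n:ℝ))^σn * Q := by
    intro r
    rw [hQ]
    rw [show ((r/(n:ℝ))^σn : ℝ) = ∏ j, (r/(n:ℝ))^(m j) from
      (Finset.prod_pow_eq_pow_sum Finset.univ m _).symm]
    rw [← Finset.prod_mul_distrib]
    refine Finset.prod_congr rfl fun j _ => ?_
    rw [← mul_pow]
    congr 1
    field_simp
  constructor
  · -- upper bound
    intro v hv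
    have step1 : ((∏ j, ∑ t ∈ Finset.range (m j + 1), (v j).choose t : ℕ) : ℝ)
        ≤ ∏ j, (((v j : ℝ) + (m j : ℝ)) ^ m j / ((m j).factorial : ℝ)) := by
      rw [Nat.cast_prod]
      refine Finset.prod_le_prod (fun j _ => Nat.cast_nonneg _) fun j _ => ?_
      calc ((∑ t ∈ Finset.range (m j + 1), (v j).choose t : ℕ) : ℝ)
          ≤ (((v j + m j).choose (m j) : ℕ) : ℝ) := by
            exact_mod_cast aux_sum_choose_le (v j) (m j)
        _ ≤ (((v j : ℝ) + (m j : ℝ))) ^ (m j) / ((m j).factorial : ℝ) := by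
            have := Nat.choose_le_pow_div (α := ℝ) (m j) (v j + m j)
            push_cast at this ⊢
            convert this using 2
    have hsx : ∑ i, ((v i : ℝ) + (m i : ℝ)) = (n:ℝ) + (σn:ℝ) := by
      rw [Finset.sum_add_distrib]
      congr 1
      · exact_mod_cast congrArg (Nat.cast : ℕ → ℝ) hv
      · exact_mod_cast rfl
    have step2 : ∏ j, ((v j : ℝ) + (m j : ℝ)) ^ m j
        ≤ (((n:ℝ) + σn)/(n:ℝ))^σn * Q := by
      have h := aux_amgm N m hσ (fun j => (v j : ℝ) + (m j : ℝ))
        (fun j => by positivity)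
      simp only [hsx] at h
      rw [← factor_eq ((n:ℝ) + σn)]
      exact h
    have step3 : (((n:ℝ) + σn)/(n:ℝ))^σn ≤ 1 + C/n := by
      have heq : ((n:ℝ) + σn)/(n:ℝ) = 1 + (σn:ℝ)/n := by field_simp
      rw [heq]
      have hb := aux_bern (σn:ℝ) hσ0 σn ((σn:ℝ)/n)
        (by positivity) (div_le_self hσ0.le (by exact_mod_cast hn))
      have heq2 : ((σn:ℝ)/n)/(σn:ℝ) = 1/n := by
        rw [div_div, mul_comm, ← div_div, div_self hσ0.ne']
      rw [heq2] at hb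
      refine hb.trans ?_
      have h1 : ((1:ℝ)+σn)^σn - 1 ≤ C := by
        rw [hC]
        nlinarith [hσ0.le, sq_nonneg ((σn:ℝ))]
      have h2 : (((1:ℝ)+σn)^σn - 1)/n ≤ C/n := by gcongr
      have h3 : (1:ℝ)/n * (((1:ℝ)+σn)^σn - 1) = (((1:ℝ)+σn)^σn - 1)/n := by ring
      linarith
    calc ((∏ j, ∑ t ∈ Finset.range (m j + 1), (v j).choose t : ℕ) : ℝ)
        ≤ ∏ j, (((v j : ℝ) + (m j : ℝ)) ^ m j / ((m j).factorial : ℝ)) := step1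
      _ = F * ∏ j, ((v j : ℝ) + (m j : ℝ)) ^ m j := by
          rw [hF, ← Finset.prod_mul_distrib]
          exact Finset.prod_congr rfl fun j _ => by rw [one_div, inv_mul_eq_div]
      _ ≤ F * ((((n:ℝ) + σn)/(n:ℝ))^σn * Q) := by
          exact mul_le_mul_of_nonneg_left step2 hF0
      _ ≤ F * ((1 + C/n) * Q) := by
          refine mul_le_mul_of_nonneg_left ?_ hF0
          exact mul_le_mul_of_nonneg_right step3 hQ0
      _ = (1 + C/n) * (F * Q) := by ring
      _ = _ := by rw [hPF]
  · -- lower bound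
    have j0 : Fin N := ⟨0, hN⟩
    by_cases hcase : n < σn
    · -- small n: LHS is nonpositive
      refine ⟨fun j => if j = j0 then n else 0, by simp, ?_⟩
      have hCn : (n:ℝ) ≤ C := by
        have h1 : (n:ℝ) ≤ (σn:ℝ) := by exact_mod_cast hcase.le
        have h2 : (0:ℝ) ≤ ((1:ℝ)+σn)^σn := by positivity
        rw [hC]; nlinarith [sq_nonneg ((σn:ℝ))]
      have hneg : 1 - C/n ≤ 0 := by
        have : (1:ℝ) ≤ C/n := (one_le_div hn0).2 hCn
        linarith
      rw [hPF]
      calc (1 - C/n) * (F * Q) ≤ 0 * (F * Q) :=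
            mul_le_mul_of_nonneg_right hneg (mul_nonneg hF0 hQ0)
        _ = 0 := zero_mul _
        _ ≤ _ := Nat.cast_nonneg _
    · push_neg at hcase   -- σn ≤ n
      have hσpos : 0 < σn := hσ
      set f : Fin N → ℕ := fun j => m j * n / σn with hf
      have hfsum : ∑ j, f j ≤ n := by
        have h1 : (∑ j, f j) * σn ≤ n * σn := by
          calc (∑ j, f j) * σn = ∑ j, f j * σn := Finset.sum_mul _ _ _
            _ ≤ ∑ j, m j * n := Finset.sum_le_sum fun j _ => Nat.div_mul_le_self _ _
            _ = n * σn := by rw [← Finset.sum_mul, hσn]; ring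
        exact Nat.le_of_mul_le_mul_right h1 hσpos
      set v : Fin N → ℕ :=
        fun j => if j = j0 then n - ∑ i ∈ Finset.univ.erase j0, f i else f j with hvdef
      have herase_le : ∑ i ∈ Finset.univ.erase j0, f i ≤ n :=
        le_trans (Finset.sum_le_sum_of_subset (Finset.erase_subset _ _)) hfsum
      have hvsum : ∑ j, v j = n := by
        rw [← Finset.add_sum_erase _ v (Finset.mem_univ j0)]
        have h2 : ∑ i ∈ Finset.univ.erase j0, v i = ∑ i ∈ Finset.univ.erase j0, f i :=
          Finset.sum_congr rfl fun i hi => by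
            rw [hvdef]; simp [Finset.ne_of_mem_erase hi]
        rw [h2]
        have hvj0 : v j0 = n - ∑ i ∈ Finset.univ.erase j0, f i := if_pos rfl
        rw [hvj0]
        exact Nat.sub_add_cancel herase_le
      have hfv : ∀ j, f j ≤ v j := by
        intro j
        by_cases hj : j = j0
        · have hvj : v j = n - ∑ i ∈ Finset.univ.erase j0, f i := if_pos hj
          have h3 : f j0 + ∑ i ∈ Finset.univ.erase j0, f i = ∑ j, f j :=
            Finset.add_sum_erase _ f (Finset.mem_univ j0)
          rw [hvj, hj]
          omega
        · have hvj : v j = f j := if_neg hj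
          omega
      refine ⟨v, hvsum, ?_⟩
      -- key per-coordinate bound
      have hnσ : (0:ℝ) ≤ (n:ℝ) - σn := by
        have : (σn:ℝ) ≤ (n:ℝ) := by exact_mod_cast hcase
        linarith
      have hxlow : ∀ j, (m j : ℝ) * ((n:ℝ) - σn) / σn ≤ ((v j + 1 - m j : ℕ) : ℝ) := by
        intro j
        have h1 : (m j : ℝ) * n < ((f j : ℝ) + 1) * σn := by
          have h0 : m j * n < m j * n / σn * σn + σn := Nat.lt_div_mul_add hσpos
          have hfj : f j = m j * n / σn := by simp only [hf]
          have h2 : m j * n < (f j + 1) * σn := by rw [hfj, Nat.succ_mul]; exact h0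
          exact_mod_cast h2
        have h2 : (f j : ℝ) ≤ (v j : ℝ) := by exact_mod_cast hfv j
        have h3 : (v j : ℝ) + 1 - m j ≤ ((v j + 1 - m j : ℕ) : ℝ) := by
          rcases le_total (m j) (v j + 1) with h | h
          · rw [show ((v j + 1 - m j : ℕ) : ℝ) = (v j : ℝ) + 1 - m j by
              rw [Nat.cast_sub h]; push_cast; ring]
          · have h4 : v j + 1 - m j = 0 := by omega
            have h5 : (v j : ℝ) + 1 - m j ≤ 0 := by
              have : ((v j : ℕ) : ℝ) + 1 ≤ (m j : ℝ) := by exact_mod_cast h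
              linarith
            rw [h4]; simpa using h5
        have h6 : (m j : ℝ) * ((n:ℝ) - σn) / σn ≤ (v j : ℝ) + 1 - m j := by
          rw [div_le_iff₀ hσ0]
          nlinarith [h1, h2, hσ0, mul_le_mul_of_nonneg_right h2 hσ0.le]
        linarith
      have hxlow0 : ∀ j, (0:ℝ) ≤ (m j : ℝ) * ((n:ℝ) - σn) / σn := fun j => by positivity
      -- product chain
      have step1 : ∏ j, ((m j : ℝ) * ((n:ℝ) - σn) / σn) ^ m j / ((m j).factorial : ℝ)
          ≤ ((∏ j, ∑ t ∈ Finset.range (m j + 1), (v j).choose t : ℕ) : ℝ) := by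
        rw [Nat.cast_prod]
        refine Finset.prod_le_prod (fun j _ => by positivity) fun j _ => ?_
        calc ((m j : ℝ) * ((n:ℝ) - σn) / σn) ^ m j / ((m j).factorial : ℝ)
            ≤ ((v j + 1 - m j : ℕ) : ℝ) ^ m j / ((m j).factorial : ℝ) := by
              gcongr <;> first
                | exact hxlow0 j
                | exact hxlow j
          _ ≤ (((v j).choose (m j) : ℕ) : ℝ) := by
              have := Nat.pow_le_choose (α := ℝ) (m j) (v j)
              push_cast at this ⊢
              convert this using 2
          _ ≤ ((∑ t ∈ Finset.range (m j + 1), (v j).choose t : ℕ) : ℝ) := by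
              have : (v j).choose (m j) ≤ ∑ t ∈ Finset.range (m j + 1), (v j).choose t :=
                Finset.single_le_sum (f := fun t => (v j).choose t)
                  (fun t _ => Nat.zero_le _) (Finset.self_mem_range_succ (m j))
              exact_mod_cast this
      have hLHSeq : ∏ j, ((m j : ℝ) * ((n:ℝ) - σn) / σn) ^ m j / ((m j).factorial : ℝ)
          = F * ((((n:ℝ) - σn)/(n:ℝ))^σn * Q) := by
        rw [← factor_eq ((n:ℝ) - σn), hF, ← Finset.prod_mul_distrib]
        exact Finset.prod_congr rfl fun j _ => by rw [one_div, inv_mul_eq_div]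
      have hbern : 1 - (σn:ℝ)^2/n ≤ (((n:ℝ) - σn)/(n:ℝ))^σn := by
        have heq : ((n:ℝ) - σn)/(n:ℝ) = 1 + (-((σn:ℝ)/n)) := by field_simp; ring
        rw [heq]
        have hb := one_add_mul_le_pow (a := -((σn:ℝ)/n))
          (by
            have h1 : (σn:ℝ)/n ≤ 1 := by
              rw [div_le_one hn0]; exact_mod_cast hcase
            linarith) σn
        have heq2 : 1 + (σn:ℝ) * (-((σn:ℝ)/n)) = 1 - (σn:ℝ)^2/n := by ring
        rw [heq2] at hb
        exact hb
      have hCσ : 1 - C/n ≤ 1 - (σn:ℝ)^2/n := by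
        have h1 : (σn:ℝ)^2 ≤ C := by
          rw [hC]
          have := pow_nonneg (by positivity : (0:ℝ) ≤ 1 + (σn:ℝ)) σn
          linarith [hσ0.le]
        have h2 : (σn:ℝ)^2/n ≤ C/n := by gcongr
        linarith
      rw [hPF]
      calc (1 - C/n) * (F * Q)
          ≤ ((((n:ℝ) - σn)/(n:ℝ))^σn) * (F * Q) := by
            refine mul_le_mul_of_nonneg_right ?_ (mul_nonneg hF0 hQ0)
            exact le_trans hCσ hbern
        _ = F * ((((n:ℝ) - σn)/(n:ℝ))^σn * Q) := by ring
        _ = ∏ j, ((m j : ℝ) * ((n:ℝ) - σn) / σn) ^ m j / ((m j).factorial : ℝ) :=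
            hLHSeq.symm
        _ ≤ _ := step1
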